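/- Let Q = {P_1,…,P_l} be a measurement scheme that determines any pure state among all states. Then there exists a constant C_Q > 0, independent of ε, such that for every ε > 0, every pure state σ, and every error term f ∈ M_{l×m}(ℝ) with ‖f‖ ≤ ε, the following holds with b := M_Q(σ) + f: every Y* ∈ H(d) which is positive semidefinite and minimizes ‖M_Q(Y) − b‖ over all positive semidefinite Y ∈ H(d) (i.e. ‖M_Q(Y*) − b‖ ≤ ‖M_Q(Y) − b‖ for every positive semidefinite Y) satisfies ‖Y* − σ‖ ≤ C_Q ε. -/

import Mathlib

open Matrix ComplexOrder

noncomputable def frobNorm {n m : Type*} [Fintype n] [Fintype m] {𝕜 : Type*} [RCLike 𝕜]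
    (X : Matrix n m 𝕜) : ℝ :=
  Real.sqrt (∑ i, ∑ j, ‖X i j‖ ^ 2)

def IsPOVM {d m : ℕ} (P : Fin m → Matrix (Fin d) (Fin d) ℂ) : Prop :=
  (∀ j, (P j).PosSemidef) ∧ (∑ j, P j) = 1

def IsMeasScheme {d l m : ℕ} (Q : Fin l → Fin m → Matrix (Fin d) (Fin d) ℂ) : Prop :=
  ∀ i, IsPOVM (Q i)

noncomputable def measMap {d l m : ℕ} (Q : Fin l → Fin m → Matrix (Fin d) (Fin d) ℂ)
    (X : Matrix (Fin d) (Fin d) ℂ) : Matrix (Fin l) (Fin m) ℝ :=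
  Matrix.of fun i j => (Matrix.trace (X * Q i j)).re

noncomputable def pureState {d : ℕ} (ψ : Fin d → ℂ) : Matrix (Fin d) (Fin d) ℂ :=
  Matrix.vecMulVec ψ (star ψ)

def IsState {d : ℕ} (ρ : Matrix (Fin d) (Fin d) ℂ) : Prop :=
  ρ.PosSemidef ∧ ρ.trace = 1

def DeterminesPure {d l m : ℕ} (Q : Fin l → Fin m → Matrix (Fin d) (Fin d) ℂ) : Prop :=
  ∀ ψ : Fin d → ℂ, (∑ k, Complex.normSq (ψ k)) = 1 →
    ∀ ρ : Matrix (Fin d) (Fin d) ℂ, IsState ρ →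
      measMap Q (pureState ψ) = measMap Q ρ → ρ = pureState ψ

noncomputable def posEigCount {d : ℕ} {X : Matrix (Fin d) (Fin d) ℂ} (hX : X.IsHermitian) : ℕ :=
  Nat.card {i : Fin d // 0 < hX.eigenvalues i}

def Kset (d : ℕ) : Set (Matrix (Fin d) (Fin d) ℂ) :=
  {X | ∃ hX : X.IsHermitian, posEigCount hX ≤ 1 ∧ frobNorm X = 1}

noncomputable def opNormHerm {d l m : ℕ}
    (T : Matrix (Fin d) (Fin d) ℂ → Matrix (Fin l) (Fin m) ℝ) : ℝ :=
  sSup {r : ℝ | ∃ X : Matrix (Fin d) (Fin d) ℂ, X.IsHermitian ∧ frobNorm X = 1 ∧ r = frobNorm (T X)}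

/-! ### Auxiliary lemmas -/

section FN
attribute [local instance] Matrix.frobeniusSeminormedAddCommGroup
  Matrix.frobeniusNormedAddCommGroup Matrix.frobeniusNormedSpace

variable {n m : Type*} [Fintype n] [Fintype m] {𝕜 : Type*} [RCLike 𝕜]

lemma frobNorm_eq_norm (X : Matrix n m 𝕜) : frobNorm X = ‖X‖ := by
  rw [Matrix.frobenius_norm_def]
  simp_rw [Real.rpow_two]
  rw [frobNorm, Real.sqrt_eq_rpow]

lemma frobNorm_nonneg (X : Matrix n m 𝕜) : 0 ≤ frobNorm X := by
  rw [frobNorm_eq_norm]; exact norm_nonneg X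

lemma frobNorm_eq_zero {X : Matrix n m 𝕜} : frobNorm X = 0 ↔ X = 0 := by
  rw [frobNorm_eq_norm]; exact norm_eq_zero

lemma frobNorm_neg (X : Matrix n m 𝕜) : frobNorm (-X) = frobNorm X := by
  rw [frobNorm_eq_norm, frobNorm_eq_norm]; exact norm_neg X

lemma frobNorm_sub_rev (X Y : Matrix n m 𝕜) : frobNorm (X - Y) = frobNorm (Y - X) := by
  rw [← frobNorm_neg, neg_sub]

lemma frobNorm_add_le (X Y : Matrix n m 𝕜) : frobNorm (X + Y) ≤ frobNorm X + frobNorm Y := by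
  simp only [frobNorm_eq_norm]; exact norm_add_le X Y

lemma frobNorm_smul (r : ℝ) (X : Matrix n m ℂ) : frobNorm (r • X) = |r| * frobNorm X := by
  simp only [frobNorm_eq_norm]
  rw [norm_smul]; simp

lemma frobNorm_smul' (r : ℝ) (X : Matrix n m ℝ) : frobNorm (r • X) = |r| * frobNorm X := by
  simp only [frobNorm_eq_norm]
  rw [norm_smul]; simp

end FN

section MeasMap
variable {d l m : ℕ} (Q : Fin l → Fin m → Matrix (Fin d) (Fin d) ℂ)

lemma measMap_sub (X Z : Matrix (Fin d) (Fin d) ℂ) :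
    measMap Q (X - Z) = measMap Q X - measMap Q Z := by
  ext i j
  simp [measMap, Matrix.sub_mul, Complex.sub_re]

lemma measMap_smul (r : ℝ) (X : Matrix (Fin d) (Fin d) ℂ) :
    measMap Q (r • X) = r • measMap Q X := by
  ext i j
  simp [measMap, Matrix.smul_mul, Complex.real_smul]

lemma measMap_row_sum (hQ : IsMeasScheme Q) (X : Matrix (Fin d) (Fin d) ℂ) (i : Fin l) :
    ∑ j, measMap Q X i j = (X.trace).re := by
  have : ∑ j, measMap Q X i j = ((∑ j, X * Q i j).trace).re := by
    simp [measMap, Matrix.trace_sum, Complex.re_sum]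
  rw [this, ← Finset.mul_sum, (hQ i).2, mul_one]

lemma pureState_apply (ψ : Fin d → ℂ) (i j : Fin d) :
    pureState ψ i j = ψ i * (starRingEnd ℂ) (ψ j) := rfl

lemma trace_pureState (ψ : Fin d → ℂ) (hψ : (∑ k, Complex.normSq (ψ k)) = 1) :
    (pureState ψ).trace = 1 := by
  simp only [Matrix.trace, Matrix.diag, pureState_apply, Complex.mul_conj]
  rw [← Complex.ofReal_sum, hψ, Complex.ofReal_one]

lemma pureState_mulVec (ψ x : Fin d → ℂ) :
    (pureState ψ) *ᵥ x = (star ψ ⬝ᵥ x) • ψ := by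
  ext i
  simp [Matrix.mulVec, pureState_apply, dotProduct, Finset.mul_sum, mul_comm, mul_left_comm]

lemma posSemidef_pureState (ψ : Fin d → ℂ) : (pureState ψ).PosSemidef := by
  refine Matrix.PosSemidef.of_dotProduct_mulVec_nonneg ?_ ?_
  · ext i j
    simp [Matrix.conjTranspose_apply, pureState_apply, mul_comm]
  · intro x
    rw [pureState_mulVec]
    have h2 : star x ⬝ᵥ ((star ψ ⬝ᵥ x) • ψ) = (star ψ ⬝ᵥ x) * (starRingEnd ℂ) (star ψ ⬝ᵥ x) := by
      simp only [dotProduct, Pi.smul_apply, smul_eq_mul, map_sum,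
        Pi.star_apply, RingHom.map_mul, RCLike.star_def, Complex.conj_conj, Finset.mul_sum]
      congr 1; ext i
      ring
    rw [h2, Complex.mul_conj]
    exact Complex.zero_le_real.2 (Complex.normSq_nonneg _)

lemma frobNorm_pureState (ψ : Fin d → ℂ) (hψ : (∑ k, Complex.normSq (ψ k)) = 1) :
    frobNorm (pureState ψ) = 1 := by
  have : ∑ i, ∑ j, ‖pureState ψ i j‖ ^ 2 = 1 := by
    have : ∀ i j : Fin d, ‖pureState ψ i j‖ ^ 2 = Complex.normSq (ψ i) * Complex.normSq (ψ j) := by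
      intro i j
      rw [pureState_apply, norm_mul, mul_pow]
      simp [Complex.sq_norm, Complex.normSq_conj]
    simp_rw [this, ← Finset.mul_sum, hψ, mul_one, hψ]
  rw [frobNorm, this, Real.sqrt_one]

end MeasMap

lemma frobNorm_nonneg' {n m : Type*} [Fintype n] [Fintype m] (X : Matrix n m ℂ) :
    0 ≤ frobNorm X := Real.sqrt_nonneg _

-- Cauchy-Schwarz style bound
lemma re_dot_le_frobNorm {d : ℕ} (X : Matrix (Fin d) (Fin d) ℂ) (v : Fin d → ℂ)
    (hv : (∑ k, Complex.normSq (v k)) = 1) :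
    (star v ⬝ᵥ X *ᵥ v).re ≤ frobNorm X := by
  have hnv : ∑ k, ‖v k‖ ^ 2 = 1 := by
    rw [← hv]; congr 1; ext k; rw [Complex.sq_norm]
  have h1 : (star v ⬝ᵥ X *ᵥ v).re ≤ ∑ i, ‖v i‖ * ‖(X *ᵥ v) i‖ := by
    refine (Complex.re_le_norm _).trans ?_
    rw [dotProduct]
    refine (norm_sum_le _ _).trans ?_
    refine Finset.sum_le_sum fun i _ => ?_
    rw [norm_mul]
    simp [Pi.star_apply]
  have h2 : (∑ i, ‖v i‖ * ‖(X *ᵥ v) i‖) ^ 2 ≤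
      (∑ i, ‖v i‖ ^ 2) * ∑ i, ‖(X *ᵥ v) i‖ ^ 2 :=
    Finset.sum_mul_sq_le_sq_mul_sq _ _ _
  have h3 : ∑ i, ‖(X *ᵥ v) i‖ ^ 2 ≤ ∑ i, ∑ j, ‖X i j‖ ^ 2 := by
    refine Finset.sum_le_sum fun i _ => ?_
    have hb : ‖(X *ᵥ v) i‖ ≤ ∑ j, ‖X i j‖ * ‖v j‖ := by
      rw [mulVec, dotProduct]
      refine (norm_sum_le _ _).trans ?_
      refine Finset.sum_le_sum fun j _ => ?_
      rw [norm_mul]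
    calc ‖(X *ᵥ v) i‖ ^ 2 ≤ (∑ j, ‖X i j‖ * ‖v j‖) ^ 2 := by
          refine pow_le_pow_left₀ (norm_nonneg _) hb 2
      _ ≤ (∑ j, ‖X i j‖ ^ 2) * ∑ j, ‖v j‖ ^ 2 := Finset.sum_mul_sq_le_sq_mul_sq _ _ _
      _ = ∑ j, ‖X i j‖ ^ 2 := by rw [hnv, mul_one]
  have hs : 0 ≤ ∑ i, ‖v i‖ * ‖(X *ᵥ v) i‖ :=
    Finset.sum_nonneg fun i _ => mul_nonneg (norm_nonneg _) (norm_nonneg _)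
  refine h1.trans ?_
  rw [frobNorm]
  have : (∑ i, ‖v i‖ * ‖(X *ᵥ v) i‖) ^ 2 ≤ ∑ i, ∑ j, ‖X i j‖ ^ 2 := by
    refine h2.trans ?_
    rw [hnv, one_mul]
    exact h3
  calc (∑ i, ‖v i‖ * ‖(X *ᵥ v) i‖)
      = Real.sqrt ((∑ i, ‖v i‖ * ‖(X *ᵥ v) i‖) ^ 2) := (Real.sqrt_sq hs).symm
    _ ≤ Real.sqrt (∑ i, ∑ j, ‖X i j‖ ^ 2) := Real.sqrt_le_sqrt this

lemma mul_diag_ite_mul_star {d : ℕ} (U : Matrix (Fin d) (Fin d) ℂ) (k : Fin d) (t : ℝ) :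
    U * diagonal (fun p => if p = k then (t : ℂ) else 0) * star U =
      t • Matrix.vecMulVec (fun i => U i k) (star fun i => U i k) := by
  ext i j
  rw [Matrix.mul_apply]
  simp only [Matrix.mul_diagonal, Matrix.star_apply, Matrix.smul_apply,
    Matrix.vecMulVec_apply, Pi.star_apply, RCLike.star_def, mul_ite, ite_mul, zero_mul, mul_zero,
    Finset.sum_ite_eq', Finset.mem_univ, if_true]
  rw [Complex.real_smul]
  ring

lemma herm_decomp {d : ℕ} (hd : 0 < d) (X : Matrix (Fin d) (Fin d) ℂ) (hX : X.IsHermitian)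
    (w : Fin d → ℂ)
    (hw : ∀ u : Fin d → ℂ, star w ⬝ᵥ u = 0 → (star u ⬝ᵥ X *ᵥ u).re ≤ 0) :
    ∃ t : ℝ, 0 ≤ t ∧ t ≤ frobNorm X ∧ ∃ v : Fin d → ℂ, (∑ k, Complex.normSq (v k)) = 1 ∧
      ∃ N : Matrix (Fin d) (Fin d) ℂ, N.PosSemidef ∧
        X = t • pureState v - N := by
  classical
  set U : Matrix (Fin d) (Fin d) ℂ := (Matrix.IsHermitian.eigenvectorUnitary hX : Matrix (Fin d) (Fin d) ℂ) with hU
  set eig : Fin d → ℝ := hX.eigenvalues with heig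
  have orth : ∀ p q : Fin d, star (⇑(hX.eigenvectorBasis p)) ⬝ᵥ (⇑(hX.eigenvectorBasis q))
      = if p = q then (1:ℂ) else 0 := by
    intro p q
    have h := orthonormal_iff_ite.mp hX.eigenvectorBasis.orthonormal p q
    rw [EuclideanSpace.inner_eq_star_dotProduct] at h
    rwa [dotProduct_comm] at h
  -- Weyl-type uniqueness of the positive eigenvalue
  have weyl : ∀ p q : Fin d, p ≠ q → 0 < eig p → 0 < eig q → False := by
    intro p q hpq hp hq
    set wp := ⇑(hX.eigenvectorBasis p) with hwp
    set wq := ⇑(hX.eigenvectorBasis q) with hwq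
    set α := star w ⬝ᵥ wp with hα
    set β := star w ⬝ᵥ wq with hβ
    obtain ⟨a, b, hab, horth⟩ : ∃ a b : ℂ, ¬(a = 0 ∧ b = 0) ∧ a * α + b * β = 0 := by
      by_cases h0 : α = 0 ∧ β = 0
      · exact ⟨1, 0, by simp, by simp [h0.1, h0.2]⟩
      · refine ⟨β, -α, ?_, by ring⟩
        intro ⟨h1, h2⟩
        exact h0 ⟨by simpa using h2, h1⟩
    set u : Fin d → ℂ := a • wp + b • wq with hu
    have hwu : star w ⬝ᵥ u = 0 := by
      rw [hu, dotProduct_add, dotProduct_smul, dotProduct_smul, ← hα, ← hβ]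
      simpa [smul_eq_mul] using horth
    have hXu : X *ᵥ u = a • (eig p • wp) + b • (eig q • wq) := by
      rw [hu, mulVec_add, mulVec_smul, mulVec_smul,
        hX.mulVec_eigenvectorBasis, hX.mulVec_eigenvectorBasis]
    have hquad : star u ⬝ᵥ X *ᵥ u = (Complex.normSq a * eig p + Complex.normSq b * eig q : ℝ) := by
      rw [hXu, hu]
      rw [star_add, star_smul, star_smul]
      simp only [add_dotProduct, dotProduct_add, smul_dotProduct, dotProduct_smul, hwp, hwq, orth]
      simp only [if_true, if_neg hpq, if_neg hpq.symm, smul_zero, add_zero, zero_add,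
        smul_eq_mul, mul_one, Complex.real_smul, Complex.ofReal_add, Complex.ofReal_mul,
        ← Complex.mul_conj, RCLike.star_def]
      ring
    have hpos : 0 < Complex.normSq a * eig p + Complex.normSq b * eig q := by
      rcases not_and_or.mp hab with h | h
      · have : 0 < Complex.normSq a := Complex.normSq_pos.mpr h
        have h2 : 0 ≤ Complex.normSq b * eig q := mul_nonneg (Complex.normSq_nonneg _) hq.le
        nlinarith
      · have : 0 < Complex.normSq b := Complex.normSq_pos.mpr h
        have h2 : 0 ≤ Complex.normSq a * eig p := mul_nonneg (Complex.normSq_nonneg _) hp.le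
        nlinarith
    have := hw u hwu
    rw [hquad] at this
    simp only [Complex.ofReal_re] at this
    linarith
  have horthv : ∀ k : Fin d, (∑ i, Complex.normSq (⇑(hX.eigenvectorBasis k) i)) = 1 := by
    intro k
    have h1 := orth k k
    rw [if_pos rfl] at h1
    have h2 : star (⇑(hX.eigenvectorBasis k)) ⬝ᵥ (⇑(hX.eigenvectorBasis k))
        = ((∑ i, Complex.normSq (⇑(hX.eigenvectorBasis k) i) : ℝ) : ℂ) := by
      rw [dotProduct, Complex.ofReal_sum]
      congr 1; ext i
      rw [Pi.star_apply, RCLike.star_def, mul_comm, Complex.mul_conj]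
    rw [h2] at h1
    exact_mod_cast h1
  by_cases hS : ∃ k, 0 < eig k
  · obtain ⟨k, hk⟩ := hS
    have huniq : ∀ p, p ≠ k → ¬ 0 < eig p := fun p hp hpos => weyl p k hp hpos hk
    set v : Fin d → ℂ := fun i => U i k with hvdef
    have hveq : v = ⇑(hX.eigenvectorBasis k) := by
      funext i
      exact hX.eigenvectorUnitary_apply i k
    have hv : (∑ i, Complex.normSq (v i)) = 1 := by rw [hveq]; exact horthv k
    set g : Fin d → ℝ := fun p => (if p = k then eig k else 0) - eig p with hgdef
    have hg : ∀ p, 0 ≤ g p := by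
      intro p
      by_cases hpk : p = k
      · simp [hgdef, hpk]
      · have := huniq p hpk
        simp only [hgdef, if_neg hpk, zero_sub, neg_nonneg]
        exact not_lt.mp this
    set N : Matrix (Fin d) (Fin d) ℂ := U * diagonal (Complex.ofReal ∘ g) * star U with hNdef
    have hNpsd : N.PosSemidef := by
      rw [hNdef, Matrix.star_eq_conjTranspose]
      exact (Matrix.PosSemidef.diagonal (fun p => Complex.zero_le_real.2 (hg p))).mul_mul_conjTranspose_same U
    refine ⟨eig k, hk.le, ?_, v, hv, N, hNpsd, ?_⟩
    · have hXv : X *ᵥ v = eig k • v := by rw [hveq]; exact hX.mulVec_eigenvectorBasis k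
      have hquad : (star v ⬝ᵥ X *ᵥ v).re = eig k := by
        rw [hXv, dotProduct_smul]
        have hvv : star v ⬝ᵥ v = 1 := by
          rw [hveq]
          have := orth k k
          rwa [if_pos rfl] at this
        rw [hvv]
        simp [Complex.real_smul]
      rw [← hquad]
      exact re_dot_le_frobNorm X v hv
    · have hsp := hX.spectral_theorem
      have hdiag : diagonal ((RCLike.ofReal : ℝ → ℂ) ∘ eig) =
          diagonal (fun p => if p = k then ((eig k : ℝ) : ℂ) else 0) - diagonal (Complex.ofReal ∘ g) := by
        ext p q
        by_cases hpq : p = q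
        · subst hpq
          by_cases hpk : p = k <;>
            simp [Matrix.diagonal_apply_eq, hgdef, hpk, Complex.ofReal_sub]
        · simp [Matrix.diagonal_apply_ne _ hpq]
      rw [Unitary.conjStarAlgAut_apply, ← hU] at hsp
      rw [hsp, hdiag, Matrix.mul_sub, Matrix.sub_mul, mul_diag_ite_mul_star U k (eig k)]
      rfl
  · push_neg at hS
    set N : Matrix (Fin d) (Fin d) ℂ := U * diagonal (Complex.ofReal ∘ (fun p => - eig p)) * star U
      with hNdef
    have hNpsd : N.PosSemidef := by
      rw [hNdef, Matrix.star_eq_conjTranspose]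
      refine (Matrix.PosSemidef.diagonal (fun p => Complex.zero_le_real.2 ?_)).mul_mul_conjTranspose_same U
      simpa using hS p
    refine ⟨0, le_refl 0, frobNorm_nonneg' X, ⇑(hX.eigenvectorBasis ⟨0, hd⟩), horthv _, N, hNpsd, ?_⟩
    have hsp := hX.spectral_theorem
    rw [Unitary.conjStarAlgAut_apply, ← hU] at hsp
    rw [zero_smul, zero_sub, hsp, hNdef, ← Matrix.neg_mul, ← Matrix.mul_neg]
    congr 2
    ext p q
    by_cases hpq : p = q
    · subst hpq; simp [Matrix.diagonal_apply_eq, heig]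
    · simp [Matrix.diagonal_apply_ne _ hpq]
lemma psd_trace_re_zero {d : ℕ} {N : Matrix (Fin d) (Fin d) ℂ} (hN : N.PosSemidef)
    (h : (N.trace).re = 0) : N = 0 := by
  classical
  have hherm := hN.1
  have hsp := hherm.spectral_theorem
  have hU1 : star (hherm.eigenvectorUnitary : Matrix (Fin d) (Fin d) ℂ) *
      (hherm.eigenvectorUnitary : Matrix (Fin d) (Fin d) ℂ) = 1 := Unitary.coe_star_mul_self _
  have htr : N.trace = ∑ p, ((hherm.eigenvalues p : ℝ) : ℂ) := by
    conv_lhs => rw [hsp]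
    rw [Unitary.conjStarAlgAut_apply, Matrix.trace_mul_cycle, hU1, Matrix.one_mul, Matrix.trace_diagonal]
    rfl
  have hre : ∑ p, hherm.eigenvalues p = 0 := by
    have h2 := congrArg Complex.re htr
    rw [h, Complex.re_sum] at h2
    simp only [Complex.ofReal_re] at h2
    exact h2.symm
  have hz : ∀ p ∈ Finset.univ, hherm.eigenvalues p = 0 :=
    (Finset.sum_eq_zero_iff_of_nonneg (fun p _ => hN.eigenvalues_nonneg p)).mp hre
  have hdag : diagonal ((RCLike.ofReal : ℝ → ℂ) ∘ hherm.eigenvalues) = 0 := by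
    ext p q
    by_cases hpq : p = q
    · subst hpq; simp [Matrix.diagonal_apply_eq, hz p (Finset.mem_univ p)]
    · simp [Matrix.diagonal_apply_ne _ hpq]
  rw [hsp, Unitary.conjStarAlgAut_apply, hdag, Matrix.mul_zero, Matrix.zero_mul]

lemma kernel_ne_zero {d l m : ℕ} (hl : 0 < l) (Q : Fin l → Fin m → Matrix (Fin d) (Fin d) ℂ)
    (hQ : IsMeasScheme Q) (hdet : DeterminesPure Q)
    {t : ℝ} (ht : 0 ≤ t) {v : Fin d → ℂ} (hv : (∑ k, Complex.normSq (v k)) = 1)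
    {N : Matrix (Fin d) (Fin d) ℂ} (hN : N.PosSemidef)
    (hX1 : frobNorm (t • pureState v - N) = 1) :
    measMap Q (t • pureState v - N) ≠ 0 := by
  intro h0
  set σ := pureState v with hσ
  set X := t • σ - N with hXdef
  have htr : (X.trace).re = 0 := by
    have h1 := measMap_row_sum Q hQ X ⟨0, hl⟩
    rw [h0] at h1
    simp only [Matrix.zero_apply, Finset.sum_const_zero] at h1
    exact h1.symm
  have htrX : X.trace = (t : ℂ) - N.trace := by
    rw [hXdef, Matrix.trace_sub, Matrix.trace_smul, trace_pureState v hv]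
    rw [Complex.real_smul, mul_one]
  have hNtr_im : (N.trace).im = 0 := by
    have h2 := Matrix.trace_conjTranspose N
    rw [hN.1] at h2
    exact Complex.conj_eq_iff_im.mp h2.symm
  have hNre : (N.trace).re = t := by
    have h3 := htr
    rw [htrX, Complex.sub_re, Complex.ofReal_re] at h3
    linarith
  have hNtr : N.trace = (t : ℂ) := by
    apply Complex.ext
    · simpa using hNre
    · simpa using hNtr_im
  rcases eq_or_lt_of_le ht with hteq | htpos
  · have hN0 : N = 0 := psd_trace_re_zero hN (by rw [hNre, ← hteq])
    rw [hXdef, ← hteq, hN0, zero_smul, sub_zero] at hX1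
    rw [frobNorm_eq_zero.mpr rfl] at hX1
    norm_num at hX1
  · set ρ : Matrix (Fin d) (Fin d) ℂ := (t⁻¹ : ℝ) • N with hρ
    have hρherm : ρ.IsHermitian := by
      have h4 : ρᴴ = (t⁻¹ : ℝ) • Nᴴ := by
        ext i j
        show (starRingEnd ℂ) ((t⁻¹ : ℝ) • N j i) = (t⁻¹ : ℝ) • (starRingEnd ℂ) (N j i)
        rw [Complex.real_smul, Complex.real_smul, RingHom.map_mul, Complex.conj_ofReal]
      rw [Matrix.IsHermitian, h4, hN.1]
    have hρpsd : ρ.PosSemidef := by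
      refine Matrix.PosSemidef.of_dotProduct_mulVec_nonneg hρherm fun x => ?_
      rw [hρ, smul_mulVec, dotProduct_smul, Complex.real_smul]
      exact mul_nonneg (Complex.zero_le_real.2 (inv_nonneg.mpr ht)) (hN.dotProduct_mulVec_nonneg x)
    have hρtr : ρ.trace = 1 := by
      rw [hρ, Matrix.trace_smul, hNtr, Complex.real_smul, ← Complex.ofReal_mul,
        inv_mul_cancel₀ htpos.ne', Complex.ofReal_one]
    have h1 : σ - ρ = (t⁻¹ : ℝ) • X := by
      rw [hXdef, smul_sub, smul_smul, inv_mul_cancel₀ htpos.ne', one_smul, hρ]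
    have hmeas : measMap Q σ = measMap Q ρ := by
      have h5 := measMap_smul Q (t⁻¹) X
      rw [h0, smul_zero] at h5
      rw [← h1, measMap_sub] at h5
      exact sub_eq_zero.mp h5
    have hρeq : ρ = pureState v := hdet v hv ρ ⟨hρpsd, hρtr⟩ hmeas
    have hNeq : N = t • σ := by
      have h6 : (t : ℝ) • ρ = N := by
        rw [hρ, smul_smul, mul_inv_cancel₀ htpos.ne', one_smul]
      rw [← h6, hρeq]
    have hX0 : X = 0 := by rw [hXdef, hNeq, sub_self]
    rw [hX0, frobNorm_eq_zero.mpr rfl] at hX1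
    norm_num at hX1
section Topo

attribute [local instance] Matrix.normedAddCommGroup Matrix.normedSpace

variable {d l m : ℕ}

lemma entry_le_frobNorm (X : Matrix (Fin d) (Fin d) ℂ) (i j : Fin d) :
    ‖X i j‖ ≤ frobNorm X := by
  have h1 : ‖X i j‖ ^ 2 ≤ ∑ i', ∑ j', ‖X i' j'‖ ^ 2 := by
    have h2 : ‖X i j‖ ^ 2 ≤ ∑ j', ‖X i j'‖ ^ 2 :=
      Finset.single_le_sum (f := fun j' => ‖X i j'‖ ^ 2) (fun _ _ => sq_nonneg _)
        (Finset.mem_univ j)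
    exact h2.trans (Finset.single_le_sum (f := fun i' => ∑ j', ‖X i' j'‖ ^ 2)
      (fun _ _ => Finset.sum_nonneg fun _ _ => sq_nonneg _) (Finset.mem_univ i))
  calc ‖X i j‖ = Real.sqrt (‖X i j‖ ^ 2) := (Real.sqrt_sq (norm_nonneg _)).symm
    _ ≤ frobNorm X := Real.sqrt_le_sqrt h1

lemma continuous_frobNorm {n' m' : Type*} [Fintype n'] [Fintype m'] {𝕜 : Type*} [RCLike 𝕜] :
    Continuous fun X : Matrix n' m' 𝕜 => frobNorm X := by
  apply Real.continuous_sqrt.comp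
  refine continuous_finset_sum _ fun i _ => continuous_finset_sum _ fun j _ => ?_
  exact (continuous_id.matrix_elem i j).norm.pow 2

lemma continuous_measMap (Q : Fin l → Fin m → Matrix (Fin d) (Fin d) ℂ) :
    Continuous (measMap Q) := by
  apply continuous_matrix
  intro i j
  apply Complex.continuous_re.comp
  have h : (fun X : Matrix (Fin d) (Fin d) ℂ => Matrix.trace (X * Q i j)) =
      fun X => ∑ p, ∑ q, X p q * Q i j q p := by
    ext X
    simp [Matrix.trace, Matrix.diag, Matrix.mul_apply]
  show Continuous fun X : Matrix (Fin d) (Fin d) ℂ => Matrix.trace (X * Q i j)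
  rw [h]
  refine continuous_finset_sum _ fun p _ => continuous_finset_sum _ fun q _ => ?_
  exact (continuous_id.matrix_elem p q).mul continuous_const

lemma isClosed_posSemidef : IsClosed {N : Matrix (Fin d) (Fin d) ℂ | N.PosSemidef} := by
  have hset : {N : Matrix (Fin d) (Fin d) ℂ | N.PosSemidef} =
      {N : Matrix (Fin d) (Fin d) ℂ | Nᴴ = N} ∩
        ⋂ x : Fin d → ℂ, {N : Matrix (Fin d) (Fin d) ℂ | 0 ≤ star x ⬝ᵥ N *ᵥ x} := by
    ext N
    simp only [Set.mem_setOf_eq, Set.mem_inter_iff, Set.mem_iInter]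
    exact ⟨fun h => ⟨h.1, fun x => h.dotProduct_mulVec_nonneg x⟩, fun h => Matrix.PosSemidef.of_dotProduct_mulVec_nonneg h.1 fun x => h.2 x⟩
  rw [hset]
  refine IsClosed.inter (isClosed_eq ?_ continuous_id) (isClosed_iInter fun x => ?_)
  · exact continuous_matrix fun i j => (continuous_id.matrix_elem j i).star
  · have hc : Continuous fun N : Matrix (Fin d) (Fin d) ℂ => star x ⬝ᵥ N *ᵥ x := by
      have h : (fun N : Matrix (Fin d) (Fin d) ℂ => star x ⬝ᵥ N *ᵥ x) =
          fun N => ∑ p, star x p * ∑ q, N p q * x q := by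
        ext N
        simp [dotProduct, Matrix.mulVec]
      rw [h]
      refine continuous_finset_sum _ fun p _ => Continuous.mul continuous_const ?_
      exact continuous_finset_sum _ fun q _ => (continuous_id.matrix_elem p q).mul continuous_const
    have hcl : IsClosed {z : ℂ | 0 ≤ z} := by
      have h : {z : ℂ | 0 ≤ z} = Complex.re ⁻¹' (Set.Ici 0) ∩ Complex.im ⁻¹' {0} := by
        ext z
        simp only [Set.mem_setOf_eq, Set.mem_inter_iff, Set.mem_preimage, Set.mem_Ici,
          Set.mem_singleton_iff, Complex.le_def, Complex.zero_re, Complex.zero_im]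
        exact ⟨fun h => ⟨h.1, h.2.symm⟩, fun h => ⟨h.1, h.2.symm⟩⟩
      rw [h]
      exact (isClosed_Ici.preimage Complex.continuous_re).inter
        (isClosed_singleton.preimage Complex.continuous_im)
    exact hcl.preimage hc

lemma exists_kernel_const (hd : 0 < d) (hl : 0 < l)
    (Q : Fin l → Fin m → Matrix (Fin d) (Fin d) ℂ) (hQ : IsMeasScheme Q)
    (hdet : DeterminesPure Q) :
    ∃ c > (0 : ℝ), ∀ t : ℝ, 0 ≤ t → t ≤ 2 → ∀ v : Fin d → ℂ, (∑ k, Complex.normSq (v k)) = 1 →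
      ∀ N : Matrix (Fin d) (Fin d) ℂ, N.PosSemidef → frobNorm N ≤ 2 →
        frobNorm (t • pureState v - N) = 1 →
          c ≤ frobNorm (measMap Q (t • pureState v - N)) := by
  classical
  set Φ : ℝ × (Fin d → ℂ) × Matrix (Fin d) (Fin d) ℂ → Matrix (Fin d) (Fin d) ℂ :=
    fun p => p.1 • pureState p.2.1 - p.2.2 with hΦdef
  set D : Set (ℝ × (Fin d → ℂ) × Matrix (Fin d) (Fin d) ℂ) :=
    (Set.Icc (0:ℝ) 2) ×ˢ (({v : Fin d → ℂ | (∑ k, Complex.normSq (v k)) = 1}) ×ˢ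
      {N : Matrix (Fin d) (Fin d) ℂ | N.PosSemidef ∧ frobNorm N ≤ 2}) with hDdef
  set K : Set (Matrix (Fin d) (Fin d) ℂ) :=
    (Φ '' D) ∩ {X : Matrix (Fin d) (Fin d) ℂ | frobNorm X = 1} with hKdef
  have hD2 : IsCompact {v : Fin d → ℂ | (∑ k, Complex.normSq (v k)) = 1} := by
    refine IsCompact.of_isClosed_subset (isCompact_closedBall (0 : Fin d → ℂ) 1) ?_ ?_
    · exact isClosed_eq (continuous_finset_sum _ fun k _ =>
        Complex.continuous_normSq.comp (continuous_apply k)) continuous_const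
    · intro v hv
      rw [Metric.mem_closedBall, dist_zero_right]
      refine (pi_norm_le_iff_of_nonneg zero_le_one).2 fun k => ?_
      have h1 : Complex.normSq (v k) ≤ 1 := by
        rw [← hv]
        exact Finset.single_le_sum (f := fun k => Complex.normSq (v k))
          (fun _ _ => Complex.normSq_nonneg _) (Finset.mem_univ k)
      have h2 : ‖v k‖ ^ 2 ≤ 1 := by
        rw [← Complex.sq_norm] at h1
        exact h1
      nlinarith [norm_nonneg (v k)]
  have hD3 : IsCompact {N : Matrix (Fin d) (Fin d) ℂ | N.PosSemidef ∧ frobNorm N ≤ 2} := by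
    refine IsCompact.of_isClosed_subset (isCompact_closedBall (0 : Matrix (Fin d) (Fin d) ℂ) 2) ?_ ?_
    · exact isClosed_posSemidef.inter (isClosed_le continuous_frobNorm continuous_const)
    · intro N hN
      rw [Metric.mem_closedBall, dist_zero_right]
      refine (Matrix.norm_le_iff (by norm_num)).2 fun i j => ?_
      exact (entry_le_frobNorm N i j).trans hN.2
  have hD : IsCompact D := isCompact_Icc.prod (hD2.prod hD3)
  have hΦc : Continuous Φ := by
    apply continuous_matrix
    intro i j
    simp only [hΦdef, Matrix.sub_apply, Matrix.smul_apply, pureState_apply]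
    refine Continuous.sub (Continuous.smul continuous_fst ?_) ?_
    · refine Continuous.mul ?_ ?_
      · exact (continuous_apply i).comp (continuous_fst.comp continuous_snd)
      · exact Complex.continuous_conj.comp ((continuous_apply j).comp (continuous_fst.comp continuous_snd))
    · exact (continuous_snd.comp continuous_snd).matrix_elem i j
  have hK : IsCompact K :=
    (hD.image hΦc).inter_right (isClosed_eq continuous_frobNorm continuous_const)
  have hKne : K.Nonempty := by
    set e0 : Fin d → ℂ := Pi.single ⟨0, hd⟩ 1 with he0def
    have he0 : (∑ k, Complex.normSq (e0 k)) = 1 := by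
      rw [he0def]
      simp [Pi.single_apply, apply_ite Complex.normSq]
    refine ⟨pureState e0, ⟨⟨(1, e0, 0), ?_, ?_⟩, frobNorm_pureState e0 he0⟩⟩
    · refine ⟨⟨zero_le_one, one_le_two⟩, he0, Matrix.PosSemidef.zero, ?_⟩
      rw [frobNorm_eq_zero.mpr rfl]
      norm_num
    · simp [hΦdef]
  obtain ⟨X₀, hX₀K, hmin⟩ := hK.exists_isMinOn hKne
    ((continuous_frobNorm.comp (continuous_measMap Q)).continuousOn)
  obtain ⟨⟨⟨t₀, v₀, N₀⟩, hpD, hpeq⟩, hX₀1⟩ := hX₀K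
  have hXeq : t₀ • pureState v₀ - N₀ = X₀ := hpeq
  have hc0 : 0 < frobNorm (measMap Q X₀) := by
    have hne : measMap Q X₀ ≠ 0 := by
      rw [← hXeq]
      exact kernel_ne_zero hl Q hQ hdet hpD.1.1 hpD.2.1 hpD.2.2.1
        (by rw [hXeq]; exact hX₀1)
    exact lt_of_le_of_ne (frobNorm_nonneg _) (fun h => hne (frobNorm_eq_zero.mp h.symm))
  refine ⟨frobNorm (measMap Q X₀), hc0, ?_⟩
  intro t ht ht2 v hv N hNpsd hN2 hX1
  have hmem : (t • pureState v - N) ∈ K :=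
    ⟨⟨(t, v, N), ⟨⟨ht, ht2⟩, hv, hNpsd, hN2⟩, rfl⟩, hX1⟩
  exact isMinOn_iff.mp hmin _ hmem

end Topo

lemma PosSemidef.real_smul' {d : ℕ} {N : Matrix (Fin d) (Fin d) ℂ} (hN : N.PosSemidef)
    {r : ℝ} (hr : 0 ≤ r) : (r • N).PosSemidef := by
  refine Matrix.PosSemidef.of_dotProduct_mulVec_nonneg ?_ ?_
  · have h4 : (r • N)ᴴ = r • Nᴴ := by
      ext i j
      show (starRingEnd ℂ) (r • N j i) = r • (starRingEnd ℂ) (N j i)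
      rw [Complex.real_smul, Complex.real_smul, RingHom.map_mul, Complex.conj_ofReal]
    rw [Matrix.IsHermitian, h4, hN.1]
  · intro x
    rw [smul_mulVec, dotProduct_smul, Complex.real_smul]
    exact mul_nonneg (Complex.zero_le_real.2 hr) (hN.dotProduct_mulVec_nonneg x)

theorem stmt15 {d l m : ℕ} (hd : 0 < d) (hl : 0 < l)
    (Q : Fin l → Fin m → Matrix (Fin d) (Fin d) ℂ) (hQ : IsMeasScheme Q)
    (hdet : DeterminesPure Q) :
    ∃ C > (0 : ℝ), ∀ ε > (0 : ℝ), ∀ ψ : Fin d → ℂ, (∑ k, Complex.normSq (ψ k)) = 1 →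
      ∀ f : Matrix (Fin l) (Fin m) ℝ, frobNorm f ≤ ε →
        ∀ Y : Matrix (Fin d) (Fin d) ℂ, Y.PosSemidef →
          (∀ Z : Matrix (Fin d) (Fin d) ℂ, Z.PosSemidef →
            frobNorm (measMap Q Y - (measMap Q (pureState ψ) + f)) ≤
              frobNorm (measMap Q Z - (measMap Q (pureState ψ) + f))) →
          frobNorm (Y - pureState ψ) ≤ C * ε := by
  obtain ⟨c, hc, hker⟩ := exists_kernel_const hd hl Q hQ hdet
  refine ⟨2 / c, by positivity, ?_⟩
  intro ε hε ψ hψ f hf Y hY hmin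
  set σ := pureState ψ with hσdef
  set X := σ - Y with hXdef
  have hYσ : frobNorm (Y - σ) = frobNorm X := by rw [hXdef]; exact frobNorm_sub_rev Y σ
  by_cases hX0 : X = 0
  · rw [hYσ, hX0, frobNorm_eq_zero.mpr rfl]
    positivity
  · set r := frobNorm X with hrdef
    have hr : 0 < r :=
      lt_of_le_of_ne (frobNorm_nonneg X) (fun h => hX0 (frobNorm_eq_zero.mp h.symm))
    have hXherm : X.IsHermitian := ((posSemidef_pureState ψ).1).sub hY.1
    have hw : ∀ u : Fin d → ℂ, star ψ ⬝ᵥ u = 0 → (star u ⬝ᵥ X *ᵥ u).re ≤ 0 := by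
      intro u hu
      have h1 : X *ᵥ u = σ *ᵥ u - Y *ᵥ u := by rw [hXdef, Matrix.sub_mulVec]
      have h2 : σ *ᵥ u = 0 := by rw [hσdef, pureState_mulVec, hu, zero_smul]
      rw [h1, h2, zero_sub, dotProduct_neg, Complex.neg_re, neg_nonpos]
      exact (Complex.le_def.mp (hY.dotProduct_mulVec_nonneg u)).1
    obtain ⟨t, ht0, htle, v, hv, N, hNpsd, hXeq⟩ := herm_decomp hd X hXherm ψ hw
    have hNle : frobNorm N ≤ 2 * r := by
      have hNval : N = t • pureState v - X := by rw [hXeq, sub_sub_cancel]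
      have h3 : frobNorm (t • pureState v) = t := by
        rw [frobNorm_smul, frobNorm_pureState v hv, abs_of_nonneg ht0, mul_one]
      calc frobNorm N = frobNorm (t • pureState v + (-X)) := by rw [hNval, sub_eq_add_neg]
        _ ≤ frobNorm (t • pureState v) + frobNorm (-X) := frobNorm_add_le _ _
        _ = t + r := by rw [h3, frobNorm_neg]
        _ ≤ 2 * r := by linarith [htle]
    have hXscaled : (r⁻¹ * t) • pureState v - r⁻¹ • N = r⁻¹ • X := by
      rw [hXeq, smul_sub, smul_smul]
    have hkey : c ≤ frobNorm (measMap Q (r⁻¹ • X)) := by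
      rw [← hXscaled]
      refine hker (r⁻¹ * t) (by positivity) ?_ v hv (r⁻¹ • N)
        (PosSemidef.real_smul' hNpsd (by positivity)) ?_ ?_
      · have : r⁻¹ * t ≤ r⁻¹ * r := by
          apply mul_le_mul_of_nonneg_left htle (by positivity)
        rw [inv_mul_cancel₀ hr.ne'] at this
        linarith
      · rw [frobNorm_smul, abs_of_nonneg (by positivity : (0:ℝ) ≤ r⁻¹)]
        calc r⁻¹ * frobNorm N ≤ r⁻¹ * (2 * r) :=
            mul_le_mul_of_nonneg_left hNle (by positivity)
          _ = 2 := by field_simp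
      · rw [hXscaled, frobNorm_smul, abs_of_nonneg (by positivity : (0:ℝ) ≤ r⁻¹),
          ← hrdef, inv_mul_cancel₀ hr.ne']
    have hMX : frobNorm (measMap Q X) ≤ 2 * ε := by
      set b := measMap Q σ + f with hbdef
      have hσle : frobNorm (measMap Q σ - b) ≤ ε := by
        have : measMap Q σ - b = -f := by rw [hbdef]; abel
        rw [this, frobNorm_neg]
        exact hf
      have hYle : frobNorm (measMap Q Y - b) ≤ ε :=
        (hmin σ (posSemidef_pureState ψ)).trans hσle
      have hsplit : measMap Q X = (measMap Q σ - b) + (b - measMap Q Y) := by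
        rw [hXdef, measMap_sub]; abel
      calc frobNorm (measMap Q X)
          ≤ frobNorm (measMap Q σ - b) + frobNorm (b - measMap Q Y) := by
            rw [hsplit]; exact frobNorm_add_le _ _
        _ = frobNorm (measMap Q σ - b) + frobNorm (measMap Q Y - b) := by
            rw [frobNorm_sub_rev b]
        _ ≤ 2 * ε := by linarith
    have hce : c ≤ r⁻¹ * (2 * ε) := by
      refine hkey.trans ?_
      rw [measMap_smul, frobNorm_smul', abs_of_nonneg (by positivity : (0:ℝ) ≤ r⁻¹)]
      exact mul_le_mul_of_nonneg_left hMX (by positivity)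
    rw [hYσ]
    have : r * c ≤ 2 * ε := by
      have := mul_le_mul_of_nonneg_left hce hr.le
      rwa [← mul_assoc, mul_inv_cancel₀ hr.ne', one_mul] at this
    calc r = r * c / c := by field_simp
      _ ≤ 2 * ε / c := by gcongr
      _ = 2 / c * ε := by ring
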